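/- Let x < y be real numbers, let α₁, α₂, α₃, α₄ satisfy 1 = α₁ > α₂ > α₃ > α₄ = 0, let a₁, a₂, a₃, a₄ be reals with a₁ + a₂ + a₃ + a₄ = 0, and suppose conditions (M1) and (E1) hold. If a₁ < −1, then for every continuous convex function f : [x,y] → ℝ and every antiderivative F of f one has f((x+y)/2) ≤ (1/(y−x)) ∫ₓʸ f(t) dt ≤ (Σ_{i=1}^{4} aᵢF(αᵢx + (1−αᵢ)y))/(y−x). -/

import Mathlib

open Set intervalIntegral MeasureTheory

lemma my_ftc (f F : ℝ → ℝ) (x y a b : ℝ) (hxa : x ≤ a) (hab : a ≤ b) (hby : b ≤ y)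
    (hf : ContinuousOn f (Set.Icc x y))
    (hF : ∀ t ∈ Set.Icc x y, HasDerivWithinAt F (f t) (Set.Icc x y) t) :
    ∫ t in a..b, f t = F b - F a := by
  have hsub : Set.Icc a b ⊆ Set.Icc x y := Set.Icc_subset_Icc hxa hby
  apply intervalIntegral.integral_eq_sub_of_hasDeriv_right_of_le hab
  · intro t ht
    exact ((hF t (hsub ht)).continuousWithinAt).mono hsub
  · intro t ht
    have htxy : t ∈ Set.Icc x y := hsub (Set.mem_Icc_of_Ioo ht)
    refine (hF t htxy).mono_of_mem_nhdsWithin ?_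
    refine Filter.mem_of_superset (Ioc_mem_nhdsGT_of_mem ⟨le_refl t, lt_of_lt_of_le ht.2 hby⟩) ?_
    intro s hs
    exact ⟨by linarith [ht.1.le, hs.1], hs.2⟩
  · exact (hf.mono hsub).intervalIntegrable_of_Icc hab

lemma my_hh_left (f : ℝ → ℝ) (a b : ℝ) (hab : a < b)
    (hc : ContinuousOn f (Set.Icc a b)) (hcv : ConvexOn ℝ (Set.Icc a b) f) :
    (b - a) * f ((a + b) / 2) ≤ ∫ t in a..b, f t := by
  have hint : IntervalIntegrable f volume a b := hc.intervalIntegrable_of_Icc hab.le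
  have hmap : ∀ t ∈ Set.Icc a b, a + b - t ∈ Set.Icc a b := by
    intro t ht; exact ⟨by linarith [ht.2], by linarith [ht.1]⟩
  have hc2 : ContinuousOn (fun t => f (a + b - t)) (Set.Icc a b) :=
    hc.comp (Continuous.continuousOn (by continuity)) hmap
  have hint2 : IntervalIntegrable (fun t => f (a + b - t)) volume a b :=
    hc2.intervalIntegrable_of_Icc hab.le
  have hpt : ∀ t ∈ Set.Icc a b, f ((a + b) / 2) ≤ (f t + f (a + b - t)) / 2 := by
    intro t ht
    have h2 := hmap t ht
    have := hcv.2 ht h2 (by norm_num : (0:ℝ) ≤ 1/2) (by norm_num : (0:ℝ) ≤ 1/2) (by norm_num)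
    have e : (1/2 : ℝ) • t + (1/2 : ℝ) • (a + b - t) = (a + b) / 2 := by
      simp [smul_eq_mul]; ring
    rw [e] at this
    simp only [smul_eq_mul] at this
    linarith
  have hrefl : (∫ t in a..b, f (a + b - t)) = ∫ t in a..b, f t := by
    rw [intervalIntegral.integral_comp_sub_left f (a + b)]
    norm_num
  calc (b - a) * f ((a + b) / 2) = ∫ _t in a..b, f ((a + b) / 2) := by
        simp [intervalIntegral.integral_const, smul_eq_mul]
    _ ≤ ∫ t in a..b, (f t + f (a + b - t)) / 2 :=
        intervalIntegral.integral_mono_on hab.le (intervalIntegrable_const)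
          ((hint.add hint2).div_const 2) hpt
    _ = ((∫ t in a..b, f t) + ∫ t in a..b, f (a + b - t)) / 2 := by
        rw [intervalIntegral.integral_div, intervalIntegral.integral_add hint hint2]
    _ = ∫ t in a..b, f t := by rw [hrefl]; ring

lemma my_hh_right (f : ℝ → ℝ) (a b : ℝ) (hab : a < b)
    (hc : ContinuousOn f (Set.Icc a b)) (hcv : ConvexOn ℝ (Set.Icc a b) f) :
    ∫ t in a..b, f t ≤ (b - a) * (f a + f b) / 2 := by
  have hba : (0:ℝ) < b - a := by linarith
  have hint : IntervalIntegrable f volume a b := hc.intervalIntegrable_of_Icc hab.le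
  have hpt : ∀ t ∈ Set.Icc a b, (b - a) * f t ≤ (b - t) * f a + (t - a) * f b := by
    intro t ht
    have h1 : (0:ℝ) ≤ (b - t) / (b - a) := div_nonneg (by linarith [ht.2]) hba.le
    have h2 : (0:ℝ) ≤ (t - a) / (b - a) := div_nonneg (by linarith [ht.1]) hba.le
    have hsum : (b - t) / (b - a) + (t - a) / (b - a) = 1 := by field_simp; ring
    have := hcv.2 (Set.left_mem_Icc.2 hab.le) (Set.right_mem_Icc.2 hab.le) h1 h2 hsum
    have e : ((b - t) / (b - a)) • a + ((t - a) / (b - a)) • b = t := by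
      simp only [smul_eq_mul]; field_simp; ring
    rw [e] at this
    simp only [smul_eq_mul] at this
    have := mul_le_mul_of_nonneg_left this hba.le
    calc (b - a) * f t ≤ (b - a) * ((b - t) / (b - a) * f a + (t - a) / (b - a) * f b) := this
      _ = (b - t) * f a + (t - a) * f b := by field_simp
  have hint1 : IntervalIntegrable (fun t => (b - a) * f t) volume a b := hint.const_mul _
  have hint2 : IntervalIntegrable (fun t => (b - t) * f a + (t - a) * f b) volume a b := by
    apply ContinuousOn.intervalIntegrable_of_Icc hab.le
    exact Continuous.continuousOn (by continuity)
  have hmono := intervalIntegral.integral_mono_on hab.le hint1 hint2 hpt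
  have e1 : (∫ t in a..b, (b - a) * f t) = (b - a) * ∫ t in a..b, f t :=
    intervalIntegral.integral_const_mul _ _
  have e2 : (∫ t in a..b, ((b - t) * f a + (t - a) * f b)) = (b - a)^2 * (f a + f b) / 2 := by
    have i1 : IntervalIntegrable (fun t => (b - t) * f a) volume a b :=
      Continuous.intervalIntegrable (by continuity) a b
    have i2 : IntervalIntegrable (fun t => (t - a) * f b) volume a b :=
      Continuous.intervalIntegrable (by continuity) a b
    rw [intervalIntegral.integral_add i1 i2]
    have j1 : (∫ t in a..b, (b - t) * f a) = (∫ t in a..b, (b - t)) * f a :=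
      integral_mul_const _ _
    have j2 : (∫ t in a..b, (t - a) * f b) = (∫ t in a..b, (t - a)) * f b :=
      integral_mul_const _ _
    have k1 : (∫ t in a..b, (b - t)) = (b - a)^2 / 2 := by
      rw [integral_sub (intervalIntegrable_const) (Continuous.intervalIntegrable (by continuity) a b)]
      simp [integral_id, smul_eq_mul]
      ring
    have k2 : (∫ t in a..b, (t - a)) = (b - a)^2 / 2 := by
      rw [integral_sub (Continuous.intervalIntegrable (by continuity) a b) (intervalIntegrable_const)]
      simp [integral_id, smul_eq_mul]
      ring
    rw [j1, j2, k1, k2]; ring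
  rw [e1, e2] at hmono
  nlinarith [hmono, hba]

lemma my_convex {f : ℝ → ℝ} {s : Set ℝ} (hcv : ConvexOn ℝ s f) {p q r : ℝ}
    (hp : p ∈ s) (hr : r ∈ s) (hpq : p ≤ q) (hqr : q ≤ r) (hpr : p < r) :
    (r - p) * f q ≤ (r - q) * f p + (q - p) * f r := by
  have hrp : (0:ℝ) < r - p := by linarith
  have h1 : (0:ℝ) ≤ (r - q) / (r - p) := div_nonneg (by linarith) hrp.le
  have h2 : (0:ℝ) ≤ (q - p) / (r - p) := div_nonneg (by linarith) hrp.le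
  have hsum : (r - q) / (r - p) + (q - p) / (r - p) = 1 := by field_simp; ring
  have h := hcv.2 hp hr h1 h2 hsum
  have e : ((r - q) / (r - p)) • p + ((q - p) / (r - p)) • r = q := by
    simp only [smul_eq_mul]; field_simp; ring
  rw [e] at h
  simp only [smul_eq_mul] at h
  have h' := mul_le_mul_of_nonneg_left h hrp.le
  calc (r - p) * f q ≤ (r - p) * ((r - q) / (r - p) * f p + (q - p) / (r - p) * f r) := h'
    _ = (r - q) * f p + (q - p) * f r := by field_simp

set_option maxHeartbeats 1000000 in
/-- Theorem 1(ii): if a₁ < -1 then f((x+y)/2) ≤ (1/(y-x))∫ₓʸ f ≤ (∑ aᵢF(αᵢx+(1-αᵢ)y))/(y-x). -/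
theorem stmt_11 (x y : ℝ) (hxy : x < y) (α₁ α₂ α₃ α₄ a₁ a₂ a₃ a₄ : ℝ)
    (hα₁ : α₁ = 1) (h12 : α₂ < α₁) (h23 : α₃ < α₂) (h34 : α₄ < α₃) (hα₄ : α₄ = 0)
    (ha : a₁ + a₂ + a₃ + a₄ = 0)
    (hM1 : a₁ * (α₂ - α₁) + (a₁ + a₂) * (α₃ - α₂) + (a₁ + a₂ + a₃) * (α₄ - α₃) = 1)
    (hE1 : a₁ * (α₂ ^ 2 - α₁ ^ 2) + (a₁ + a₂) * (α₃ ^ 2 - α₂ ^ 2)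
        + (a₁ + a₂ + a₃) * (α₄ ^ 2 - α₃ ^ 2) = 1)
    (ha₁ : a₁ < -1)
    (f F : ℝ → ℝ)
    (hf_cont : ContinuousOn f (Set.Icc x y)) (hf_conv : ConvexOn ℝ (Set.Icc x y) f)
    (hF : ∀ t ∈ Set.Icc x y, HasDerivWithinAt F (f t) (Set.Icc x y) t) :
    f ((x + y) / 2) ≤ (1 / (y - x)) * ∫ t in x..y, f t ∧
      (1 / (y - x)) * (∫ t in x..y, f t)
        ≤ (a₁ * F (α₁ * x + (1 - α₁) * y) + a₂ * F (α₂ * x + (1 - α₂) * y)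
          + a₃ * F (α₃ * x + (1 - α₃) * y) + a₄ * F (α₄ * x + (1 - α₄) * y)) / (y - x) := by
  subst hα₁ hα₄
  have hyx : (0:ℝ) < y - x := by linarith
  obtain ⟨t₂, ht₂def⟩ : ∃ t, t = α₂ * x + (1 - α₂) * y := ⟨_, rfl⟩
  obtain ⟨t₃, ht₃def⟩ : ∃ t, t = α₃ * x + (1 - α₃) * y := ⟨_, rfl⟩
  rw [← ht₂def, ← ht₃def]
  have hxt2 : x < t₂ := by
    rw [ht₂def]; nlinarith [mul_pos (sub_pos.2 h12) hyx]
  have ht23 : t₂ < t₃ := by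
    rw [ht₂def, ht₃def]; nlinarith [mul_pos (sub_pos.2 h23) hyx]
  have ht3y : t₃ < y := by
    rw [ht₃def]; nlinarith [mul_pos h34 hyx]
  -- FTC on the pieces
  have hI1 : ∫ t in x..t₂, f t = F t₂ - F x :=
    my_ftc f F x y x t₂ le_rfl hxt2.le (by linarith) hf_cont hF
  have hI2 : ∫ t in t₂..t₃, f t = F t₃ - F t₂ :=
    my_ftc f F x y t₂ t₃ hxt2.le ht23.le (by linarith) hf_cont hF
  have hI3 : ∫ t in t₃..y, f t = F y - F t₃ :=
    my_ftc f F x y t₃ y (by linarith) ht3y.le le_rfl hf_cont hF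
  have hIfull : ∫ t in x..y, f t = F y - F x :=
    my_ftc f F x y x y le_rfl hxy.le le_rfl hf_cont hF
  -- Part 1
  have part1 : f ((x + y) / 2) ≤ (1 / (y - x)) * ∫ t in x..y, f t := by
    have hhl := my_hh_left f x y hxy hf_cont hf_conv
    have hinv : (0:ℝ) < 1 / (y - x) := by positivity
    have h := mul_le_mul_of_nonneg_left hhl hinv.le
    have e : 1 / (y - x) * ((y - x) * f ((x + y) / 2)) = f ((x + y) / 2) := by
      field_simp
    linarith [h, e.ge, e.le]
  refine ⟨part1, ?_⟩
  -- HH inequalities on pieces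
  have hsub1 : Set.Icc x t₂ ⊆ Set.Icc x y := Set.Icc_subset_Icc le_rfl (by linarith)
  have hsub2 : Set.Icc t₂ t₃ ⊆ Set.Icc x y := Set.Icc_subset_Icc hxt2.le (by linarith)
  have hsub3 : Set.Icc t₃ y ⊆ Set.Icc x y := Set.Icc_subset_Icc (by linarith) le_rfl
  have h1 := my_hh_left f x t₂ hxt2 (hf_cont.mono hsub1) (hf_conv.subset hsub1 (convex_Icc _ _))
  have h2 := my_hh_right f t₂ t₃ ht23 (hf_cont.mono hsub2) (hf_conv.subset hsub2 (convex_Icc _ _))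
  have h3 := my_hh_left f t₃ y ht3y (hf_cont.mono hsub3) (hf_conv.subset hsub3 (convex_Icc _ _))
  rw [hI1] at h1
  rw [hI2] at h2
  rw [hI3] at h3
  -- key algebraic identities
  have key1 : (1 + a₁) * (t₂ - x) + (1 + a₁ + a₂) * (t₃ - t₂)
      + (1 + a₁ + a₂ + a₃) * (y - t₃) = 0 := by
    rw [ht₂def, ht₃def]; linear_combination (x - y) * hM1
  have key2 : (1 + a₁) * (t₂ - x) * (x + t₂) + (1 + a₁ + a₂) * (t₃ - t₂) * (t₂ + t₃)
      + (1 + a₁ + a₂ + a₃) * (y - t₃) * (t₃ + y) = 0 := by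
    rw [ht₂def, ht₃def]
    linear_combination (2 * y * (x - y)) * hM1 + (x - y) ^ 2 * hE1
  -- sign facts
  have hc1 : (1 + a₁) < 0 := by linarith
  have hu : (1 + a₁) * (t₂ - x) < 0 := mul_neg_of_neg_of_pos hc1 (by linarith)
  have hwR : (1 + a₁ + a₂ + a₃) * (y - t₃) * (y - t₂)
      = (1 + a₁) * (t₂ - x) * (t₃ - x) := by
    linear_combination key2 - (t₂ + t₃) * key1
  have hup : (1 + a₁) * (t₂ - x) * (t₃ - x) < 0 :=
    mul_neg_of_neg_of_pos hu (by linarith)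
  have hw : (1 + a₁ + a₂ + a₃) * (y - t₃) < 0 := by
    by_contra hcon
    push_neg at hcon
    have := mul_nonneg hcon (show (0:ℝ) ≤ y - t₂ by linarith)
    linarith [hwR.le, hwR.ge]
  have hv : 0 ≤ (1 + a₁ + a₂) * (t₃ - t₂) := by linarith [key1]
  have hc3 : (1 + a₁ + a₂ + a₃) ≤ 0 := by
    by_contra hcon
    push_neg at hcon
    have := mul_nonneg hcon.le (show (0:ℝ) ≤ y - t₃ by linarith)
    linarith
  have hc2 : 0 ≤ (1 + a₁ + a₂) := by
    by_contra hcon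
    push_neg at hcon
    have := mul_neg_of_neg_of_pos hcon (show (0:ℝ) < t₃ - t₂ by linarith)
    linarith
  -- scaled HH inequalities
  have s1 : (1 + a₁) * (F t₂ - F x) ≤ (1 + a₁) * ((t₂ - x) * f ((x + t₂) / 2)) := by
    have h := mul_nonneg (show (0:ℝ) ≤ -(1 + a₁) by linarith)
      (show (0:ℝ) ≤ (F t₂ - F x) - (t₂ - x) * f ((x + t₂) / 2) by linarith)
    linarith [h]
  have s2 : (1 + a₁ + a₂) * (F t₃ - F t₂)
      ≤ (1 + a₁ + a₂) * ((t₃ - t₂) * (f t₂ + f t₃) / 2) := by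
    have h := mul_nonneg hc2
      (show (0:ℝ) ≤ (t₃ - t₂) * (f t₂ + f t₃) / 2 - (F t₃ - F t₂) by linarith)
    linarith [h]
  have s3 : (1 + a₁ + a₂ + a₃) * (F y - F t₃)
      ≤ (1 + a₁ + a₂ + a₃) * ((y - t₃) * f ((t₃ + y) / 2)) := by
    have h := mul_nonneg (show (0:ℝ) ≤ -(1 + a₁ + a₂ + a₃) by linarith)
      (show (0:ℝ) ≤ (F y - F t₃) - (y - t₃) * f ((t₃ + y) / 2) by linarith)
    linarith [h]
  -- convexity comparisons between midpoints
  have hm₁mem : (x + t₂) / 2 ∈ Set.Icc x y := ⟨by linarith, by linarith⟩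
  have hm₃mem : (t₃ + y) / 2 ∈ Set.Icc x y := ⟨by linarith, by linarith⟩
  have conv1 : ((t₃ + y) / 2 - (x + t₂) / 2) * f t₂
      ≤ ((t₃ + y) / 2 - t₂) * f ((x + t₂) / 2) + (t₂ - (x + t₂) / 2) * f ((t₃ + y) / 2) :=
    my_convex hf_conv hm₁mem hm₃mem (by linarith) (by linarith) (by linarith)
  have conv2 : ((t₃ + y) / 2 - (x + t₂) / 2) * f t₃
      ≤ ((t₃ + y) / 2 - t₃) * f ((x + t₂) / 2) + (t₃ - (x + t₂) / 2) * f ((t₃ + y) / 2) :=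
    my_convex hf_conv hm₁mem hm₃mem (by linarith) (by linarith) (by linarith)
  -- coefficient identities
  have co1 : (1 + a₁) * (t₂ - x) * (t₃ + y - x - t₂)
      + (1 + a₁ + a₂) * (t₃ - t₂) * (y - t₂) = 0 := by
    linear_combination (t₃ + y) * key1 - key2
  have co2 : (1 + a₁ + a₂ + a₃) * (y - t₃) * (t₃ + y - x - t₂)
      + (1 + a₁ + a₂) * (t₃ - t₂) * (t₃ - x) = 0 := by
    linear_combination key2 - (x + t₂) * key1
  -- S ≤ 0
  have hz1 : ((1 + a₁) * (t₂ - x) * (t₃ + y - x - t₂)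
      + (1 + a₁ + a₂) * (t₃ - t₂) * (y - t₂)) * f ((x + t₂) / 2) = 0 := by
    rw [co1, zero_mul]
  have hz2 : ((1 + a₁ + a₂ + a₃) * (y - t₃) * (t₃ + y - x - t₂)
      + (1 + a₁ + a₂) * (t₃ - t₂) * (t₃ - x)) * f ((t₃ + y) / 2) = 0 := by
    rw [co2, zero_mul]
  have hmul1 := mul_le_mul_of_nonneg_left conv1 hv
  have hmul2 := mul_le_mul_of_nonneg_left conv2 hv
  have hQ : (0:ℝ) < t₃ + y - x - t₂ := by linarith
  have hQS : (t₃ + y - x - t₂) * ((1 + a₁) * (t₂ - x) * f ((x + t₂) / 2)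
      + (1 + a₁ + a₂) * ((t₃ - t₂) * (f t₂ + f t₃) / 2)
      + (1 + a₁ + a₂ + a₃) * ((y - t₃) * f ((t₃ + y) / 2))) ≤ 0 := by
    linarith only [hmul1, hmul2, hz1.le, hz1.ge, hz2.le, hz2.ge]
  have hS : (1 + a₁) * (t₂ - x) * f ((x + t₂) / 2)
      + (1 + a₁ + a₂) * ((t₃ - t₂) * (f t₂ + f t₃) / 2)
      + (1 + a₁ + a₂ + a₃) * ((y - t₃) * f ((t₃ + y) / 2)) ≤ 0 := by
    by_contra hcon
    push_neg at hcon
    have := mul_pos hQ hcon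
    linarith only [this, hQS]
  have hsum : (1 + a₁) * (F t₂ - F x) + (1 + a₁ + a₂) * (F t₃ - F t₂)
      + (1 + a₁ + a₂ + a₃) * (F y - F t₃) ≤ 0 := by linarith only [s1, s2, s3, hS]
  -- assemble
  have hmain : F y - F x ≤ a₁ * F x + a₂ * F t₂ + a₃ * F t₃ + a₄ * F y := by
    have hid : a₁ * F x + a₂ * F t₂ + a₃ * F t₃ + a₄ * F y - (F y - F x)
        = -((1 + a₁) * (F t₂ - F x) + (1 + a₁ + a₂) * (F t₃ - F t₂)
          + (1 + a₁ + a₂ + a₃) * (F y - F t₃)) := by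
      linear_combination (F y) * ha
    linarith only [hsum, hid.le, hid.ge]
  have e1 : (1:ℝ) * x + (1 - 1) * y = x := by ring
  have e4 : (0:ℝ) * x + (1 - 0) * y = y := by ring
  rw [hIfull, e1, e4]
  rw [show (a₁ * F x + a₂ * F t₂ + a₃ * F t₃ + a₄ * F y) / (y - x)
      = 1 / (y - x) * (a₁ * F x + a₂ * F t₂ + a₃ * F t₃ + a₄ * F y) by ring]
  exact mul_le_mul_of_nonneg_left hmain (by positivity)
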